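/- For all smooth vector fields A, B, C: ℝ³ → ℝ³ the quasi-isomorphism relation determining b̃₃ on three gauge fields holds: b̃₃(A,B,C) + b̃₂( F₂(B,C), A ) + b̃₂( F₂(A,C), B ) + b̃₂( F₂(A,B), C ) = (v·B)(v·C) curl A + (v·A)(v·C) curl B + (v·A)(v·B) curl C − curl( (v·A)(v·B)C + (v·A)(v·C)B + (v·B)(v·C)A ), where the right-hand side is F₃(curl A, B, C) + F₃(curl B, A, C) + F₃(curl C, A, B) − b₁(F₃(A,B,C)) with b₁ = curl on gauge fields. -/

import Mathlib

/- STATEMENT 3: quasi-isomorphism relation determining b̃₃ on three gauge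
fields: b̃₃(A,B,C) + b̃₂(F₂(B,C),A) + b̃₂(F₂(A,C),B) + b̃₂(F₂(A,B),C)
= F₃(curl A,B,C) + F₃(curl B,A,C) + F₃(curl C,A,B) − b₁(F₃(A,B,C)). -/

noncomputable section

abbrev V3 := Fin 3 → ℝ

/-- Partial derivative ∂_i f at x. -/
def pd (f : V3 → ℝ) (i : Fin 3) (x : V3) : ℝ :=
  fderiv ℝ f x (Pi.single i 1)

/-- Levi-Civita symbol ε_{abc} on Fin 3. -/
def eps (a b c : Fin 3) : ℝ :=
  (((b : ℕ) : ℝ) - ((a : ℕ) : ℝ)) * (((c : ℕ) : ℝ) - ((b : ℕ) : ℝ)) *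
    (((c : ℕ) : ℝ) - ((a : ℕ) : ℝ)) / 2

/-- (curl A)_a = Σ_{b,c} ε_{abc} ∂_b A_c. -/
def curl (A : V3 → V3) (a : Fin 3) (x : V3) : ℝ :=
  ∑ b, ∑ c, eps a b c * pd (fun y => A y c) b x

/-- b̃₂(A,B)_a = Σ_{i,b,c} v_i ε_{abc}(A_c ∂_b B_i + ∂_b A_i B_c). -/
def b2g (v : V3) (A B : V3 → V3) (x : V3) (a : Fin 3) : ℝ :=
  ∑ i, ∑ b, ∑ c, v i * eps a b c *
    (A x c * pd (fun y => B y i) b x + pd (fun y => A y i) b x * B x c)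

/-- b̃₃(A,B,C)_a = 2 Σ_{i,j,b,c} v_i v_j ε_{abc}( ∂_bA_i(B_jC_c + B_cC_j)
  + ∂_bB_i(C_jA_c + C_cA_j) + ∂_bC_i(A_jB_c + A_cB_j) ). -/
def b3g (v : V3) (A B C : V3 → V3) (x : V3) (a : Fin 3) : ℝ :=
  2 * ∑ i, ∑ j, ∑ b, ∑ c, v i * v j * eps a b c *
    (pd (fun y => A y i) b x * (B x j * C x c + B x c * C x j)
      + pd (fun y => B y i) b x * (C x j * A x c + C x c * A x j)
      + pd (fun y => C y i) b x * (A x j * B x c + A x c * B x j))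

/-- F₂(A,B) = −(v·A)B − (v·B)A. -/
def F2 (v : V3) (A B : V3 → V3) : V3 → V3 :=
  fun y b => -(∑ i, v i * A y i) * B y b - (∑ i, v i * B y i) * A y b

/-- F₃(A,B,C) = (v·A)(v·B)C + (v·A)(v·C)B + (v·B)(v·C)A. -/
def F3 (v : V3) (A B C : V3 → V3) : V3 → V3 :=
  fun y b => (∑ i, v i * A y i) * (∑ i, v i * B y i) * C y b
    + (∑ i, v i * A y i) * (∑ i, v i * C y i) * B y b
    + (∑ i, v i * B y i) * (∑ i, v i * C y i) * A y b

lemma pd_mul (f g : V3 → ℝ) (hf : Differentiable ℝ f) (hg : Differentiable ℝ g)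
    (i : Fin 3) (x : V3) :
    pd (fun y => f y * g y) i x = pd f i x * g x + f x * pd g i x := by
  simp [pd, fderiv_fun_mul (hf x) (hg x)]; ring

lemma pd_neg (f : V3 → ℝ) (i : Fin 3) (x : V3) :
    pd (fun y => -f y) i x = -pd f i x := by
  simp [pd, fderiv_neg]

lemma pd_add (f g : V3 → ℝ) (hf : Differentiable ℝ f) (hg : Differentiable ℝ g)
    (i : Fin 3) (x : V3) :
    pd (fun y => f y + g y) i x = pd f i x + pd g i x := by
  simp [pd, fderiv_fun_add (hf x) (hg x)]

lemma pd_sub (f g : V3 → ℝ) (hf : Differentiable ℝ f) (hg : Differentiable ℝ g)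
    (i : Fin 3) (x : V3) :
    pd (fun y => f y - g y) i x = pd f i x - pd g i x := by
  simp [pd, fderiv_fun_sub (hf x) (hg x)]

lemma pd_sum {ι : Type*} [Fintype ι] (f : ι → V3 → ℝ)
    (hf : ∀ j, Differentiable ℝ (f j)) (i : Fin 3) (x : V3) :
    pd (fun y => ∑ j, f j y) i x = ∑ j, pd (f j) i x := by
  simp [pd, fderiv_fun_sum (fun j _ => (hf j) x)]

lemma pd_dot (v : V3) (A : V3 → V3) (hA : ∀ i, Differentiable ℝ (fun y => A y i))
    (b : Fin 3) (x : V3) :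
    pd (fun y => ∑ i, v i * A y i) b x = ∑ i, v i * pd (fun y => A y i) b x := by
  rw [pd_sum (fun i y => v i * A y i) (fun i => ((hA i).const_mul (v i))) b x]
  exact Finset.sum_congr rfl fun i _ => by
    simp [pd, fderiv_const_mul ((hA i) x) (v i)]

lemma dot_diff (v : V3) (A : V3 → V3) (hA : ∀ i, Differentiable ℝ (fun y => A y i)) :
    Differentiable ℝ (fun y => ∑ i, v i * A y i) :=
  Differentiable.fun_sum fun i _ => (hA i).const_mul (v i)

lemma pdF2 (v : V3) (A B : V3 → V3)
    (hA : ∀ i, Differentiable ℝ (fun y => A y i))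
    (hB : ∀ i, Differentiable ℝ (fun y => B y i))
    (c b : Fin 3) (x : V3) :
    pd (fun y => F2 v A B y c) b x
      = -((∑ i, v i * pd (fun y => A y i) b x) * B x c)
        - (∑ i, v i * A x i) * pd (fun y => B y c) b x
        - (∑ i, v i * pd (fun y => B y i) b x) * A x c
        - (∑ i, v i * B x i) * pd (fun y => A y c) b x := by
  have hdA := dot_diff v A hA
  have hdB := dot_diff v B hB
  show pd (fun y => (-(∑ i, v i * A y i)) * B y c - (∑ i, v i * B y i) * A y c) b x = _
  rw [pd_sub _ _ (hdA.fun_neg.fun_mul (hB c)) (hdB.fun_mul (hA c)),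
    pd_mul _ _ hdA.fun_neg (hB c), pd_mul _ _ hdB (hA c),
    pd_neg, pd_dot v A hA, pd_dot v B hB]
  ring

lemma pdF3 (v : V3) (A B C : V3 → V3)
    (hA : ∀ i, Differentiable ℝ (fun y => A y i))
    (hB : ∀ i, Differentiable ℝ (fun y => B y i))
    (hC : ∀ i, Differentiable ℝ (fun y => C y i))
    (c b : Fin 3) (x : V3) :
    pd (fun y => F3 v A B C y c) b x
      = ((∑ i, v i * pd (fun y => A y i) b x) * (∑ i, v i * B x i)
            + (∑ i, v i * A x i) * (∑ i, v i * pd (fun y => B y i) b x)) * C x c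
        + (∑ i, v i * A x i) * (∑ i, v i * B x i) * pd (fun y => C y c) b x
        + ((∑ i, v i * pd (fun y => A y i) b x) * (∑ i, v i * C x i)
            + (∑ i, v i * A x i) * (∑ i, v i * pd (fun y => C y i) b x)) * B x c
        + (∑ i, v i * A x i) * (∑ i, v i * C x i) * pd (fun y => B y c) b x
        + ((∑ i, v i * pd (fun y => B y i) b x) * (∑ i, v i * C x i)
            + (∑ i, v i * B x i) * (∑ i, v i * pd (fun y => C y i) b x)) * A x c
        + (∑ i, v i * B x i) * (∑ i, v i * C x i) * pd (fun y => A y c) b x := by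
  have hdA := dot_diff v A hA
  have hdB := dot_diff v B hB
  have hdC := dot_diff v C hC
  show pd (fun y => (∑ i, v i * A y i) * (∑ i, v i * B y i) * C y c
      + (∑ i, v i * A y i) * (∑ i, v i * C y i) * B y c
      + (∑ i, v i * B y i) * (∑ i, v i * C y i) * A y c) b x = _
  rw [pd_add _ _ (((hdA.fun_mul hdB).fun_mul (hC c)).fun_add ((hdA.fun_mul hdC).fun_mul (hB c)))
      ((hdB.fun_mul hdC).fun_mul (hA c)),
    pd_add _ _ ((hdA.fun_mul hdB).fun_mul (hC c)) ((hdA.fun_mul hdC).fun_mul (hB c)),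
    pd_mul _ _ (hdA.fun_mul hdB) (hC c), pd_mul _ _ (hdA.fun_mul hdC) (hB c),
    pd_mul _ _ (hdB.fun_mul hdC) (hA c),
    pd_mul _ _ hdA hdB, pd_mul _ _ hdA hdC, pd_mul _ _ hdB hdC,
    pd_dot v A hA, pd_dot v B hB, pd_dot v C hC]
  ring

set_option maxHeartbeats 4000000 in
theorem deformed_CS_QISO_b3_on_gauge_fields
    (v : V3) (A B C : V3 → V3)
    (hA : ContDiff ℝ (⊤ : ℕ∞) A) (hB : ContDiff ℝ (⊤ : ℕ∞) B)
    (hC : ContDiff ℝ (⊤ : ℕ∞) C) :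
    ∀ (a : Fin 3) (x : V3),
      b3g v A B C x a
        + b2g v (F2 v B C) A x a
        + b2g v (F2 v A C) B x a
        + b2g v (F2 v A B) C x a
      = (∑ i, v i * B x i) * (∑ i, v i * C x i) * curl A a x
        + (∑ i, v i * A x i) * (∑ i, v i * C x i) * curl B a x
        + (∑ i, v i * A x i) * (∑ i, v i * B x i) * curl C a x
        - curl (F3 v A B C) a x := by
  intro a x
  have hA' : ∀ i, Differentiable ℝ (fun y => A y i) :=
    differentiable_pi.mp (hA.differentiable (by simp))
  have hB' : ∀ i, Differentiable ℝ (fun y => B y i) :=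
    differentiable_pi.mp (hB.differentiable (by simp))
  have hC' : ∀ i, Differentiable ℝ (fun y => C y i) :=
    differentiable_pi.mp (hC.differentiable (by simp))
  fin_cases a
  all_goals simp only [b3g, b2g, curl]
  all_goals simp only [pdF2 v B C hB' hC', pdF2 v A C hA' hC', pdF2 v A B hA' hB',
    pdF3 v A B C hA' hB' hC']
  all_goals simp only [F2]
  all_goals
    simp only [Fin.sum_univ_three, eps]
    norm_num
    ring
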